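/- Let n ≥ 1, let μ be a finite Borel measure on ℝ^{n+1} with compact support, and fix x₀, y ∈ ℝ^{n+1}, t₀ > 0 and h ∈ ℝ. Set x_s = x₀ + s·y and t_s = t₀ + s·h. Then the function s ↦ F_{x_s,t_s}(μ) is differentiable at s = 0, with derivative (4π t₀)^{-n/2} ∫_{ℝ^{n+1}} [ h·(‖x − x₀‖²/(4 t₀²) − n/(2 t₀)) + ⟨x − x₀, y⟩/(2 t₀) ] · exp(−‖x − x₀‖²/(4 t₀)) dμ(x). -/

import Mathlib

open MeasureTheory

/-- The F-functional `F_{x₀,t₀}(μ) = (4π t₀)^{-n/2} ∫ exp(-‖x-x₀‖²/(4t₀)) dμ(x)`. -/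
noncomputable def Ffn (n : ℕ) (μ : Measure (EuclideanSpace ℝ (Fin (n + 1))))
    (x₀ : EuclideanSpace ℝ (Fin (n + 1))) (t₀ : ℝ) : ℝ :=
  (4 * Real.pi * t₀) ^ (-(n : ℝ) / 2) *
    ∫ x, Real.exp (-‖x - x₀‖ ^ 2 / (4 * t₀)) ∂μ

lemma aux_hasDerivAt {E : Type*} [NormedAddCommGroup E] [InnerProductSpace ℝ E]
    (x x₀ y : E) (h t₀ : ℝ) {s : ℝ} (ht : 0 < t₀ + s * h) :
    HasDerivAt (fun u : ℝ => Real.exp (-‖x - (x₀ + u • y)‖ ^ 2 / (4 * (t₀ + u * h))))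
      ((h * (‖x - (x₀ + s • y)‖ ^ 2 / (4 * (t₀ + s * h) ^ 2)) +
          (inner ℝ (x - (x₀ + s • y)) y : ℝ) / (2 * (t₀ + s * h))) *
        Real.exp (-‖x - (x₀ + s • y)‖ ^ 2 / (4 * (t₀ + s * h)))) s := by
  have hc : HasDerivAt (fun u : ℝ => x - (x₀ + u • y)) (-y) s := by
    have h1 : HasDerivAt (fun u : ℝ => x₀ + u • y) y s := by
      simpa using ((hasDerivAt_id s).smul_const y).const_add x₀
    have h3 := (hasDerivAt_const s x).sub h1
    rw [zero_sub] at h3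
    exact h3
  have hN : HasDerivAt (fun u : ℝ => ‖x - (x₀ + u • y)‖ ^ 2)
      (-(2 * (inner ℝ (x - (x₀ + s • y)) y : ℝ))) s := by
    have h2 := HasDerivAt.inner ℝ hc hc
    simp only [real_inner_self_eq_norm_sq] at h2
    refine h2.congr_deriv ?_
    rw [inner_neg_right, inner_neg_left, real_inner_comm]
    ring
  have hden : HasDerivAt (fun u : ℝ => 4 * (t₀ + u * h)) (4 * h) s := by
    simpa using (((hasDerivAt_id s).mul_const h).const_add t₀).const_mul 4
  have hφ := (hN.neg.div hden (by positivity)).exp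
  refine hφ.congr_deriv ?_
  have hne : t₀ + s * h ≠ 0 := ne_of_gt ht
  simp only [Pi.div_apply, Pi.neg_apply]
  field_simp
  ring

theorem stmt_1 (n : ℕ) (hn : 1 ≤ n) (μ : Measure (EuclideanSpace ℝ (Fin (n + 1))))
    [IsFiniteMeasure μ]
    (hcpt : ∃ K : Set (EuclideanSpace ℝ (Fin (n + 1))), IsCompact K ∧ μ Kᶜ = 0)
    (x₀ y : EuclideanSpace ℝ (Fin (n + 1))) (t₀ : ℝ) (ht₀ : 0 < t₀) (h : ℝ) :
    HasDerivAt (fun s : ℝ => Ffn n μ (x₀ + s • y) (t₀ + s * h))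
      ((4 * Real.pi * t₀) ^ (-(n : ℝ) / 2) *
        ∫ x, (h * (‖x - x₀‖ ^ 2 / (4 * t₀ ^ 2) - n / (2 * t₀)) +
            (inner ℝ (x - x₀) y : ℝ) / (2 * t₀)) *
          Real.exp (-‖x - x₀‖ ^ 2 / (4 * t₀)) ∂μ)
      0 := by
  obtain ⟨K, hK, hKc⟩ := hcpt
  obtain ⟨R, hR⟩ := hK.isBounded.subset_closedBall 0
  set M : ℝ := max R 0 + ‖x₀‖ + ‖y‖ with hM
  have hM0 : 0 ≤ M := by positivity
  set ε : ℝ := min 1 (t₀ / (2 * (|h| + 1))) with hε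
  have hεpos : 0 < ε := lt_min one_pos (by positivity)
  have hε1 : ε ≤ 1 := min_le_left _ _
  have hts : ∀ s ∈ Metric.ball (0 : ℝ) ε, t₀ / 2 < t₀ + s * h := by
    intro s hs
    rw [Metric.mem_ball, Real.dist_eq, sub_zero] at hs
    have h1 : |s * h| < t₀ / 2 := by
      rw [abs_mul]
      calc |s| * |h| ≤ |s| * (|h| + 1) := by
            exact mul_le_mul_of_nonneg_left (by linarith [abs_nonneg h]) (abs_nonneg s)
        _ < ε * (|h| + 1) := mul_lt_mul_of_pos_right hs (by positivity)
        _ ≤ (t₀ / (2 * (|h| + 1))) * (|h| + 1) :=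
            mul_le_mul_of_nonneg_right (min_le_right _ _) (by positivity)
        _ = t₀ / 2 := by field_simp
    have := neg_lt_of_abs_lt h1
    linarith
  set F : ℝ → EuclideanSpace ℝ (Fin (n + 1)) → ℝ := fun s x =>
    Real.exp (-‖x - (x₀ + s • y)‖ ^ 2 / (4 * (t₀ + s * h))) with hF
  set F' : ℝ → EuclideanSpace ℝ (Fin (n + 1)) → ℝ := fun s x =>
    (h * (‖x - (x₀ + s • y)‖ ^ 2 / (4 * (t₀ + s * h) ^ 2)) +
        (inner ℝ (x - (x₀ + s • y)) y : ℝ) / (2 * (t₀ + s * h))) *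
      Real.exp (-‖x - (x₀ + s • y)‖ ^ 2 / (4 * (t₀ + s * h))) with hF'
  have hFcont : ∀ s, Continuous (F s) := by
    intro s; apply Real.continuous_exp.comp; fun_prop
  have hF'cont : Continuous (F' 0) := by
    apply Continuous.mul
    · apply Continuous.add
      · fun_prop
      · exact (Continuous.inner (continuous_id.sub continuous_const)
          continuous_const).div_const _
    · apply Real.continuous_exp.comp; fun_prop
  have haeK : ∀ᵐ x ∂μ, x ∈ K := by
    rw [MeasureTheory.ae_iff]
    exact hKc
  have hexple : ∀ s (x : EuclideanSpace ℝ (Fin (n + 1))), 0 < t₀ + s * h → F s x ≤ 1 := by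
    intro s x hts'
    rw [hF]
    apply Real.exp_le_one_iff.mpr
    exact div_nonpos_of_nonpos_of_nonneg (neg_nonpos.mpr (by positivity)) (by linarith)
  have hF0int : Integrable (F 0) μ :=
    (integrable_const (1 : ℝ)).mono' (hFcont 0).aestronglyMeasurable
      (Filter.Eventually.of_forall fun x => by
        rw [Real.norm_eq_abs, abs_of_pos (Real.exp_pos _)]; exact hexple 0 x (by simpa using ht₀))
  set C : ℝ := |h| * M ^ 2 / t₀ ^ 2 + M * ‖y‖ / t₀ with hC
  have h_bound : ∀ᵐ x ∂μ, ∀ s ∈ Metric.ball (0 : ℝ) ε, ‖F' s x‖ ≤ C := by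
    filter_upwards [haeK] with x hx s hs
    have ht2 := hts s hs
    have htpos : 0 < t₀ + s * h := by linarith
    have hsle : |s| ≤ 1 := by
      rw [Metric.mem_ball, Real.dist_eq, sub_zero] at hs
      linarith
    have hnorm : ‖x - (x₀ + s • y)‖ ≤ M := by
      calc ‖x - (x₀ + s • y)‖ ≤ ‖x‖ + ‖x₀ + s • y‖ := norm_sub_le _ _
        _ ≤ ‖x‖ + (‖x₀‖ + ‖s • y‖) := by linarith [norm_add_le x₀ (s • y)]
        _ ≤ max R 0 + (‖x₀‖ + ‖y‖) := by
            have h1 : ‖x‖ ≤ max R 0 := le_trans (by simpa using hR hx) (le_max_left _ _)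
            have h2 : ‖s • y‖ ≤ ‖y‖ := by
              rw [norm_smul, Real.norm_eq_abs]
              nlinarith [norm_nonneg y, abs_nonneg s]
            linarith
        _ = M := by rw [hM]; ring
    have hAbs1 : |h * (‖x - (x₀ + s • y)‖ ^ 2 / (4 * (t₀ + s * h) ^ 2))|
        ≤ |h| * (M ^ 2 / (4 * (t₀ / 2) ^ 2)) := by
      rw [abs_mul, abs_of_nonneg (by positivity :
        (0:ℝ) ≤ ‖x - (x₀ + s • y)‖ ^ 2 / (4 * (t₀ + s * h) ^ 2))]
      apply mul_le_mul_of_nonneg_left _ (abs_nonneg h)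
      exact div_le_div₀ (by positivity) (pow_le_pow_left₀ (norm_nonneg _) hnorm 2)
        (by positivity) (by nlinarith)
    have hAbs2 : |(inner ℝ (x - (x₀ + s • y)) y : ℝ) / (2 * (t₀ + s * h))|
        ≤ M * ‖y‖ / (2 * (t₀ / 2)) := by
      rw [abs_div, abs_of_nonneg (by linarith : (0:ℝ) ≤ 2 * (t₀ + s * h))]
      exact div_le_div₀ (by positivity)
        ((abs_real_inner_le_norm _ _).trans
          (mul_le_mul_of_nonneg_right hnorm (norm_nonneg _)))
        (by positivity) (by linarith)
    have hexp1 : Real.exp (-‖x - (x₀ + s • y)‖ ^ 2 / (4 * (t₀ + s * h))) ≤ 1 := hexple s x htpos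
    calc ‖F' s x‖ = |h * (‖x - (x₀ + s • y)‖ ^ 2 / (4 * (t₀ + s * h) ^ 2)) +
            (inner ℝ (x - (x₀ + s • y)) y : ℝ) / (2 * (t₀ + s * h))| *
          Real.exp (-‖x - (x₀ + s • y)‖ ^ 2 / (4 * (t₀ + s * h))) := by
          rw [hF', Real.norm_eq_abs, abs_mul, abs_of_pos (Real.exp_pos _)]
      _ ≤ (|h| * (M ^ 2 / (4 * (t₀ / 2) ^ 2)) + M * ‖y‖ / (2 * (t₀ / 2))) * 1 :=
          mul_le_mul ((abs_add_le _ _).trans (add_le_add hAbs1 hAbs2)) hexp1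
            (Real.exp_pos _).le (by positivity)
      _ = C := by rw [hC]; field_simp; ring
  have h_diff : ∀ᵐ x ∂μ, ∀ s ∈ Metric.ball (0 : ℝ) ε, HasDerivAt (F · x) (F' s x) s := by
    apply Filter.Eventually.of_forall
    intro x s hs
    exact aux_hasDerivAt x x₀ y h t₀ (lt_trans (by linarith) (hts s hs))
  have key := hasDerivAt_integral_of_dominated_loc_of_deriv_le (Metric.ball_mem_nhds 0 hεpos)
    (Filter.Eventually.of_forall fun s => (hFcont s).aestronglyMeasurable)
    hF0int hF'cont.aestronglyMeasurable h_bound (integrable_const C) h_diff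
  obtain ⟨hF'int, hI⟩ := key
  have hA : HasDerivAt (fun s : ℝ => (4 * Real.pi * (t₀ + s * h)) ^ (-(n : ℝ) / 2))
      ((4 * Real.pi * h) * (-(n : ℝ) / 2) * (4 * Real.pi * t₀) ^ (-(n : ℝ) / 2 - 1)) 0 := by
    have hbase : HasDerivAt (fun s : ℝ => 4 * Real.pi * (t₀ + s * h)) (4 * Real.pi * h) 0 := by
      have := (((hasDerivAt_id (0:ℝ)).mul_const h).const_add t₀).const_mul (4 * Real.pi)
      simpa using this
    have hne : (4 * Real.pi * (t₀ + 0 * h)) ≠ 0 := by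
      have := Real.pi_pos
      have : (0:ℝ) < 4 * Real.pi * (t₀ + 0 * h) := by nlinarith
      exact this.ne'
    have := hbase.rpow_const (p := -(n : ℝ) / 2) (Or.inl hne)
    simpa using this
  have htotal := hA.mul hI
  have hFfn : (fun s : ℝ => Ffn n μ (x₀ + s • y) (t₀ + s * h)) =
      fun s : ℝ => (4 * Real.pi * (t₀ + s * h)) ^ (-(n : ℝ) / 2) * ∫ x, F s x ∂μ := rfl
  rw [hFfn]
  refine htotal.congr_deriv ?_
  have hsplit : (∫ x, (h * (‖x - x₀‖ ^ 2 / (4 * t₀ ^ 2) - n / (2 * t₀)) +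
        (inner ℝ (x - x₀) y : ℝ) / (2 * t₀)) * Real.exp (-‖x - x₀‖ ^ 2 / (4 * t₀)) ∂μ)
      = (∫ x, F' 0 x ∂μ) - ((n : ℝ) * h / (2 * t₀)) * ∫ x, F 0 x ∂μ := by
    rw [← integral_const_mul, ← integral_sub hF'int (hF0int.const_mul _)]
    congr 1
    funext x
    simp only [hF', hF, zero_smul, add_zero, zero_mul]
    ring
  rw [hsplit]
  have hA0 : (4 * Real.pi * (t₀ + 0 * h)) = 4 * Real.pi * t₀ := by ring
  rw [hA0]
  have hrpow : (4 * Real.pi * t₀) ^ (-(n : ℝ) / 2 - 1) =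
      (4 * Real.pi * t₀) ^ (-(n : ℝ) / 2) / (4 * Real.pi * t₀) := by
    rw [Real.rpow_sub (by positivity), Real.rpow_one]
  rw [hrpow]
  have hπ : Real.pi ≠ 0 := Real.pi_ne_zero
  have ht : t₀ ≠ 0 := ne_of_gt ht₀
  field_simp
  ring
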